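/- If the Klein bottle group K = ⟨a, b | a^b = a⁻¹⟩ is a verbally closed subgroup of a group G, then ⟨⟨b²⟩⟩ ∩ K = ⟨b²⟩, where ⟨⟨b²⟩⟩ is the normal closure of b² in G. -/

import Mathlib

/-- The single relator `b⁻¹ * a * b * a` of the Klein bottle group
`K = ⟨a, b ∣ b⁻¹ a b = a⁻¹⟩`, with generator `0 = a`, `1 = b`. -/
def KleinRels : Set (FreeGroup (Fin 2)) :=
  {(FreeGroup.of 1)⁻¹ * FreeGroup.of 0 * FreeGroup.of 1 * FreeGroup.of 0}

/-- The Klein bottle group. -/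
abbrev KleinGroup := PresentedGroup KleinRels

def aK : KleinGroup := PresentedGroup.of 0
def bK : KleinGroup := PresentedGroup.of 1


/-- `H` is verbally closed in `G`: every equation `w(x₁,x₂,…) = h` with `h ∈ H`,
`w` a word in the free group, that has a solution in `G` has a solution in `H`. -/
def VerballyClosed {G : Type*} [Group G] (H : Subgroup G) : Prop :=
  ∀ (w : FreeGroup ℕ) (h : G), h ∈ H → (∃ g : ℕ → G, FreeGroup.lift g w = h) →
    ∃ k : ℕ → G, (∀ n, k n ∈ H) ∧ FreeGroup.lift k w = h

namespace KleinProof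

open Subgroup

/-! ### The sign function -/

def ε (n : ℤ) : ℤ := if Even n then 1 else -1

lemma ε_even {n : ℤ} (h : Even n) : ε n = 1 := if_pos h
lemma ε_odd {n : ℤ} (h : ¬ Even n) : ε n = -1 := if_neg h
lemma ε_zero : ε 0 = 1 := ε_even Even.zero
lemma ε_one : ε 1 = -1 := ε_odd (by rw [Int.even_iff]; decide)
lemma ε_negone : ε (-1) = -1 := ε_odd (by rw [Int.even_iff]; decide)

lemma ε_add (m n : ℤ) : ε (m + n) = ε m * ε n := by
  unfold ε
  by_cases hm : Even m <;> by_cases hn : Even n <;>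
    simp [hm, hn, Int.even_add]

lemma ε_neg (n : ℤ) : ε (-n) = ε n := by
  unfold ε; simp

lemma ε_sq (n : ℤ) : ε n * ε n = 1 := by
  by_cases h : Even n <;> simp [ε, h]

/-! ### The concrete model `KB` of the Klein bottle group -/

@[ext] structure KB where
  x : ℤ
  y : ℤ

instance : Mul KB := ⟨fun p q => ⟨p.x + ε p.y * q.x, p.y + q.y⟩⟩
instance : One KB := ⟨⟨0, 0⟩⟩
instance : Inv KB := ⟨fun p => ⟨-(ε p.y * p.x), -p.y⟩⟩

lemma mul_def (p q : KB) : p * q = ⟨p.x + ε p.y * q.x, p.y + q.y⟩ := rfl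
lemma one_def : (1 : KB) = ⟨0, 0⟩ := rfl
lemma inv_def (p : KB) : p⁻¹ = ⟨-(ε p.y * p.x), -p.y⟩ := rfl

instance : Group KB where
  mul_assoc p q r := by
    ext <;> simp [mul_def, ε_add] <;> ring
  one_mul p := by ext <;> simp [mul_def, one_def, ε_zero]
  mul_one p := by ext <;> simp [mul_def, one_def]
  inv_mul_cancel p := by
    ext <;> simp [mul_def, inv_def, one_def, ε_neg]

def A : KB := ⟨1, 0⟩
def B : KB := ⟨0, 1⟩

def fKB : Fin 2 → KB := ![A, B]

lemma relLift : ∀ r ∈ KleinRels, FreeGroup.lift fKB r = 1 := by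
  intro r hr
  rcases hr with rfl
  simp only [map_mul, map_inv, FreeGroup.lift_apply_of, fKB, Matrix.cons_val_zero,
    Matrix.cons_val_one, Matrix.head_cons]
  have h1 : B⁻¹ * A = ⟨-1, -1⟩ := by
    ext <;> norm_num [A, B, mul_def, inv_def, ε, Int.even_iff]
  have h2 : (⟨-1, -1⟩ : KB) * B = ⟨-1, 0⟩ := by
    ext <;> norm_num [A, B, mul_def, ε, Int.even_iff]
  have h3 : (⟨-1, 0⟩ : KB) * A = 1 := by
    rw [one_def]
    ext <;> norm_num [A, B, mul_def, ε, Int.even_iff]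
  rw [h1, h2, h3]

def ψ : KleinGroup →* KB := PresentedGroup.toGroup relLift

lemma ψ_a : ψ aK = A := PresentedGroup.toGroup.of relLift
lemma ψ_b : ψ bK = B := PresentedGroup.toGroup.of relLift

lemma A_zpow (x : ℤ) : A ^ x = ⟨x, 0⟩ := by
  induction x using Int.induction_on with
  | zero => ext <;> simp [one_def]
  | succ i ih => rw [zpow_add_one, ih]; ext <;> simp [mul_def, A, ε_zero]
  | pred i ih => rw [zpow_sub_one, ih]; ext <;> simp [mul_def, inv_def, A, ε_zero] <;> ring

lemma B_zpow (y : ℤ) : B ^ y = ⟨0, y⟩ := by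
  induction y using Int.induction_on with
  | zero => ext <;> simp [one_def]
  | succ i ih => rw [zpow_add_one, ih]; ext <;> simp [mul_def, B]
  | pred i ih => rw [zpow_sub_one, ih]; ext <;> simp [mul_def, inv_def, B] <;> ring

lemma ψ_ab (x y : ℤ) : ψ (aK ^ x * bK ^ y) = ⟨x, y⟩ := by
  rw [map_mul, map_zpow, map_zpow, ψ_a, ψ_b, A_zpow, B_zpow]
  ext <;> simp [mul_def]

/-! ### Relations in the Klein bottle group -/

lemma rel1 : bK⁻¹ * aK * bK * aK = 1 := by
  have hmem : ((FreeGroup.of 1)⁻¹ * FreeGroup.of 0 * FreeGroup.of 1 * FreeGroup.of 0 :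
      FreeGroup (Fin 2)) ∈ Subgroup.normalClosure KleinRels :=
    Subgroup.subset_normalClosure (Set.mem_singleton _)
  have h2 : bK⁻¹ * aK * bK * aK = PresentedGroup.mk KleinRels
      ((FreeGroup.of 1)⁻¹ * FreeGroup.of 0 * FreeGroup.of 1 * FreeGroup.of 0) := by
    simp [aK, bK, PresentedGroup.of, map_mul, map_inv]
  rw [h2]
  exact (QuotientGroup.eq_one_iff _).2 hmem

lemma rel_conj : bK⁻¹ * aK * bK = aK⁻¹ := by
  calc bK⁻¹ * aK * bK = (bK⁻¹ * aK * bK * aK) * aK⁻¹ := by group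
    _ = aK⁻¹ := by rw [rel1]; group

lemma binv_conj (x : ℤ) : bK⁻¹ * aK ^ x * bK = aK ^ (-x) := by
  have h : (MulAut.conj bK⁻¹) aK = aK⁻¹ := by
    simpa [MulAut.conj_apply] using rel_conj
  have h2 := map_zpow (MulAut.conj bK⁻¹) aK x
  rw [h] at h2
  simpa [MulAut.conj_apply, inv_zpow, zpow_neg] using h2

lemma b_conj (x : ℤ) : bK * aK ^ x * bK⁻¹ = aK ^ (-x) := by
  have h := binv_conj (-x)
  rw [neg_neg] at h
  rw [← h]; group

lemma comm_ba (y : ℤ) : ∀ x : ℤ, bK ^ y * aK ^ x = aK ^ (ε y * x) * bK ^ y := by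
  induction y using Int.induction_on with
  | zero => intro x; simp [ε_zero]
  | succ i ih =>
    intro x
    have key : bK * aK ^ x = aK ^ (-x) * bK := by rw [← b_conj x]; group
    have hε : ε ((i : ℤ) + 1) * x = ε (i : ℤ) * -x := by rw [ε_add, ε_one]; ring
    calc bK ^ ((i:ℤ)+1) * aK ^ x = bK ^ (i:ℤ) * (bK * aK ^ x) := by rw [zpow_add_one]; group
      _ = bK ^ (i:ℤ) * aK ^ (-x) * bK := by rw [key]; group
      _ = aK ^ (ε (i:ℤ) * -x) * bK ^ (i:ℤ) * bK := by rw [ih]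
      _ = aK ^ (ε ((i:ℤ)+1) * x) * bK ^ ((i:ℤ)+1) := by rw [hε, zpow_add_one]; group
  | pred i ih =>
    intro x
    have key : bK⁻¹ * aK ^ x = aK ^ (-x) * bK⁻¹ := by rw [← binv_conj x]; group
    have hε : ε (-(i : ℤ) - 1) * x = ε (-(i : ℤ)) * -x := by
      rw [show (-(i:ℤ) - 1) = (-(i:ℤ)) + (-1) by ring, ε_add, ε_negone]
      ring
    calc bK ^ (-(i:ℤ)-1) * aK ^ x = bK ^ (-(i:ℤ)) * (bK⁻¹ * aK ^ x) := by
          rw [zpow_sub_one]; group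
      _ = bK ^ (-(i:ℤ)) * aK ^ (-x) * bK⁻¹ := by rw [key]; group
      _ = aK ^ (ε (-(i:ℤ)) * -x) * bK ^ (-(i:ℤ)) * bK⁻¹ := by rw [ih]
      _ = aK ^ (ε (-(i:ℤ)-1) * x) * bK ^ (-(i:ℤ)-1) := by rw [hε, zpow_sub_one]; group

/-! ### Normal form in the Klein bottle group -/

def secSub : Subgroup KleinGroup where
  carrier := {k | k = aK ^ (ψ k).x * bK ^ (ψ k).y}
  one_mem' := by
    show (1 : KleinGroup) = aK ^ (ψ 1).x * bK ^ (ψ 1).y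
    rw [map_one]
    show (1 : KleinGroup) = aK ^ (0:ℤ) * bK ^ (0:ℤ)
    simp
  mul_mem' := by
    intro p q hp hq
    show p * q = aK ^ (ψ (p * q)).x * bK ^ (ψ (p * q)).y
    rw [map_mul,
      show (ψ p * ψ q).x = (ψ p).x + ε (ψ p).y * (ψ q).x from rfl,
      show (ψ p * ψ q).y = (ψ p).y + (ψ q).y from rfl, zpow_add, zpow_add]
    conv_lhs => rw [show p = aK ^ (ψ p).x * bK ^ (ψ p).y from hp,
      show q = aK ^ (ψ q).x * bK ^ (ψ q).y from hq]
    calc aK ^ (ψ p).x * bK ^ (ψ p).y * (aK ^ (ψ q).x * bK ^ (ψ q).y)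
        = aK ^ (ψ p).x * (bK ^ (ψ p).y * aK ^ (ψ q).x) * bK ^ (ψ q).y := by group
      _ = aK ^ (ψ p).x * (aK ^ (ε (ψ p).y * (ψ q).x) * bK ^ (ψ p).y) * bK ^ (ψ q).y := by
          rw [comm_ba]
      _ = aK ^ (ψ p).x * aK ^ (ε (ψ p).y * (ψ q).x) * (bK ^ (ψ p).y * bK ^ (ψ q).y) := by
          group
  inv_mem' := by
    intro p hp
    show p⁻¹ = aK ^ (ψ p⁻¹).x * bK ^ (ψ p⁻¹).y
    rw [map_inv,
      show ((ψ p)⁻¹).x = -(ε (ψ p).y * (ψ p).x) from rfl,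
      show ((ψ p)⁻¹).y = -(ψ p).y from rfl]
    conv_lhs => rw [show p = aK ^ (ψ p).x * bK ^ (ψ p).y from hp]
    rw [mul_inv_rev, ← zpow_neg, ← zpow_neg, comm_ba]
    congr 1
    rw [ε_neg]
    ring

lemma sec (k : KleinGroup) : k = aK ^ (ψ k).x * bK ^ (ψ k).y := by
  refine PresentedGroup.generated_by KleinRels secSub ?_ k
  intro j
  fin_cases j
  · show aK = aK ^ (ψ aK).x * bK ^ (ψ aK).y
    rw [ψ_a]
    show aK = aK ^ (1:ℤ) * bK ^ (0:ℤ)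
    simp
  · show bK = aK ^ (ψ bK).x * bK ^ (ψ bK).y
    rw [ψ_b]
    show bK = aK ^ (0:ℤ) * bK ^ (1:ℤ)
    simp

/-! ### Words that are products of conjugates of `y^{±2}` -/

section Words

variable {G : Type*} [Group G]

def σ (b : Bool) : ℤ := if b then 1 else -1

/-- product of conjugates of `y^{±2}` prescribed by a list of (conjugator, sign) pairs. -/
def pv (y : G) (L : List (G × Bool)) : G :=
  (L.map (fun p => p.1 * (y ^ 2) ^ σ p.2 * p.1⁻¹)).prod

/-- same, with conjugators given by a function `ℕ → G` starting at index `i+1`,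
and `y = k 0`. -/
def pvN (k : ℕ → G) : List Bool → ℕ → G
  | [], _ => 1
  | s :: t, i => k (i + 1) * ((k 0) ^ 2) ^ σ s * (k (i + 1))⁻¹ * pvN k t (i + 1)

def wordN : List Bool → ℕ → FreeGroup ℕ
  | [], _ => 1
  | s :: t, i => FreeGroup.of (i + 1) * ((FreeGroup.of 0) ^ 2) ^ σ s *
      (FreeGroup.of (i + 1))⁻¹ * wordN t (i + 1)

lemma lift_wordN (k : ℕ → G) : ∀ (s : List Bool) (i : ℕ),
    FreeGroup.lift k (wordN s i) = pvN k s i := by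
  intro s
  induction s with
  | nil => intro i; simp [wordN, pvN]
  | cons a t ih =>
    intro i
    simp [wordN, pvN, map_mul, map_zpow, map_pow, map_inv, ih]

lemma bridge : ∀ (L : List (G × Bool)) (k : ℕ → G) (i : ℕ),
    (∀ j, k (i + j + 1) = (L.getD j (1, true)).1) →
    pvN k (L.map Prod.snd) i = pv (k 0) L := by
  intro L
  induction L with
  | nil => intro k i _; rfl
  | cons p L ih =>
    intro k i hk
    show k (i + 1) * ((k 0) ^ 2) ^ σ p.2 * (k (i + 1))⁻¹ * pvN k (L.map Prod.snd) (i + 1)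
        = pv (k 0) (p :: L)
    have h0 : k (i + 1) = p.1 := by
      have := hk 0
      simpa using this
    rw [ih k (i + 1) (fun j => by
      have := hk (j + 1)
      rwa [show i + (j + 1) + 1 = i + 1 + j + 1 by omega, List.getD_cons_succ] at this), h0]
    show p.1 * ((k 0) ^ 2) ^ σ p.2 * p.1⁻¹ * pv (k 0) L = pv (k 0) (p :: L)
    rw [pv, pv, List.map_cons, List.prod_cons]

/-- every element of the normal closure of `{y^2}` is a `pv`-value. -/
lemma exists_list (y h : G) (hh : h ∈ Subgroup.normalClosure {y ^ 2}) :
    ∃ L : List (G × Bool), pv y L = h := by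
  have h1 : h ∈ Submonoid.closure
      (Group.conjugatesOfSet {y ^ 2} ∪ (Group.conjugatesOfSet {y ^ 2})⁻¹) := by
    rw [← Subgroup.closure_toSubmonoid]
    exact hh
  obtain ⟨l, hl, hprod⟩ := Submonoid.exists_list_of_mem_closure h1
  subst hprod
  clear h1 hh
  induction l with
  | nil => exact ⟨[], rfl⟩
  | cons x l ih =>
    obtain ⟨L, hL⟩ := ih (fun z hz => hl z (List.mem_cons_of_mem x hz))
    have hx := hl x List.mem_cons_self
    rw [List.prod_cons, ← hL]
    rcases hx with hx | hx
    · obtain ⟨a, ha, hconj⟩ := Group.mem_conjugatesOfSet_iff.1 hx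
      rcases ha with rfl
      obtain ⟨c, hc⟩ := isConj_iff.1 hconj
      refine ⟨(c, true) :: L, ?_⟩
      rw [pv, List.map_cons, List.prod_cons, ← pv]
      rw [show σ true = 1 from rfl, zpow_one, hc]
    · obtain ⟨a, ha, hconj⟩ := Group.mem_conjugatesOfSet_iff.1 (Set.mem_inv.1 hx)
      rcases ha with rfl
      obtain ⟨c, hc⟩ := isConj_iff.1 hconj
      refine ⟨(c, false) :: L, ?_⟩
      rw [pv, List.map_cons, List.prod_cons, ← pv]
      rw [show σ false = -1 from rfl, zpow_neg, zpow_one]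
      rw [show c * (y ^ 2)⁻¹ * c⁻¹ = (c * y ^ 2 * c⁻¹)⁻¹ by group, hc, inv_inv]

/-- the key application of verbal closedness. -/
lemma vc_step (φ : KleinGroup →* G) (hvc : VerballyClosed φ.range) (h : G) (e : ℤ)
    (hH : h ∈ φ.range) (L : List (G × Bool)) (hL : pv (φ bK) L * (φ bK) ^ e = h) :
    ∃ (k : ℕ → G) (s : List Bool), (∀ n, k n ∈ φ.range) ∧ pvN k s 0 * (k 0) ^ e = h := by
  set w : FreeGroup ℕ := wordN (L.map Prod.snd) 0 * (FreeGroup.of 0) ^ e with hw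
  have hsol : ∃ g : ℕ → G, FreeGroup.lift g w = h := by
    refine ⟨fun n => Nat.casesOn n (φ bK) (fun m => (L.getD m (1, true)).1), ?_⟩
    rw [hw, map_mul, map_zpow, FreeGroup.lift_apply_of, lift_wordN]
    rw [bridge L _ 0 (fun j => by simp)]
    exact hL
  obtain ⟨k, hkH, hk⟩ := hvc w h hH hsol
  refine ⟨k, L.map Prod.snd, hkH, ?_⟩
  rw [hw, map_mul, map_zpow, FreeGroup.lift_apply_of, lift_wordN] at hk
  exact hk

end Words

/-! ### The family of subgroups of `KB` used for the analysis -/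

def Ssub (u n : ℤ) : Subgroup KB where
  carrier := {p | u ∣ p.x ∧ (2 * n) ∣ p.y}
  one_mem' := ⟨dvd_zero u, dvd_zero (2 * n)⟩
  mul_mem' := by
    rintro p q ⟨h1, h2⟩ ⟨h3, h4⟩
    exact ⟨dvd_add h1 (h3.mul_left _), dvd_add h2 h4⟩
  inv_mem' := by
    rintro p ⟨h1, h2⟩
    exact ⟨(h1.mul_left _).neg_right, h2.neg_right⟩

lemma mem_Ssub {u n : ℤ} {p : KB} : p ∈ Ssub u n ↔ u ∣ p.x ∧ (2 * n) ∣ p.y := Iff.rfl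

lemma conj_mem_Ssub {u n : ℤ} {p : KB} (hp : p ∈ Ssub u n) (r : KB) :
    r * p * r⁻¹ ∈ Ssub u n := by
  obtain ⟨h1, h2⟩ := hp
  have hy : Even p.y := by
    obtain ⟨c, hc⟩ := h2
    exact ⟨n * c, by rw [hc]; ring⟩
  constructor
  · show u ∣ r.x + ε r.y * p.x + ε (r.y + p.y) * (-(ε r.y * r.x))
    have hx : r.x + ε r.y * p.x + ε (r.y + p.y) * (-(ε r.y * r.x)) = ε r.y * p.x := by
      rw [ε_add, ε_even hy]
      linear_combination (-r.x) * ε_sq r.y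
    rw [hx]
    exact h1.mul_left _
  · show (2 * n) ∣ r.y + p.y + -r.y
    rwa [show r.y + p.y + -r.y = p.y by ring]

lemma pvN_mem {G : Type*} [Group G] (φ : KleinGroup →* G) (u n : ℤ) (k : ℕ → G)
    (hk : ∀ m, k m ∈ φ.range)
    (h0 : (k 0) ^ 2 ∈ Subgroup.map φ (Subgroup.comap ψ (Ssub u n))) :
    ∀ (s : List Bool) (i : ℕ), pvN k s i ∈ Subgroup.map φ (Subgroup.comap ψ (Ssub u n)) := by
  intro s
  induction s with
  | nil => intro i; exact one_mem _
  | cons a t ih =>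
    intro i
    refine mul_mem ?_ (ih (i + 1))
    obtain ⟨τ, hτ⟩ := hk (i + 1)
    obtain ⟨μ, hμ, hφμ⟩ := Subgroup.mem_map.1 h0
    refine Subgroup.mem_map.2 ⟨τ * μ ^ σ a * τ⁻¹, ?_, ?_⟩
    · refine Subgroup.mem_comap.2 ?_
      rw [map_mul, map_mul, map_inv, map_zpow]
      exact conj_mem_Ssub (Subgroup.zpow_mem _ (Subgroup.mem_comap.1 hμ) (σ a)) (ψ τ)
    · rw [map_mul, map_mul, map_inv, map_zpow, hτ, hφμ]

end KleinProof

set_option maxHeartbeats 1600000 in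
open KleinProof in
theorem normalClosure_inf_K {G : Type*} [Group G] (φ : KleinGroup →* G)
    (hinj : Function.Injective φ) (hvc : VerballyClosed φ.range) :
    Subgroup.normalClosure {φ bK ^ 2} ⊓ φ.range = Subgroup.closure {φ bK ^ 2} := by
  apply le_antisymm
  · intro g hg
    obtain ⟨hgN, hgR⟩ := Subgroup.mem_inf.1 hg
    -- Stage 1: `g = a^x b^y` with `x, y` even
    obtain ⟨L, hL⟩ := exists_list (φ bK) g hgN
    obtain ⟨k, s, hkH, hks⟩ := vc_step φ hvc g 0 hgR L (by rw [zpow_zero, mul_one]; exact hL)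
    rw [zpow_zero, mul_one] at hks
    have h0 : (k 0) ^ 2 ∈ Subgroup.map φ (Subgroup.comap ψ (Ssub 2 1)) := by
      obtain ⟨lam, hlam⟩ := hkH 0
      refine Subgroup.mem_map.2 ⟨lam ^ 2, Subgroup.mem_comap.2 ?_, by rw [map_pow, hlam]⟩
      rw [map_pow]
      constructor
      · show (2:ℤ) ∣ ((ψ lam) ^ 2).x
        rw [pow_two]
        show (2:ℤ) ∣ (ψ lam).x + ε (ψ lam).y * (ψ lam).x
        by_cases h : Even (ψ lam).y
        · rw [ε_even h]; exact ⟨(ψ lam).x, by ring⟩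
        · rw [ε_odd h]; exact ⟨0, by ring⟩
      · show (2*1:ℤ) ∣ ((ψ lam) ^ 2).y
        rw [pow_two]
        show (2*1:ℤ) ∣ (ψ lam).y + (ψ lam).y
        exact ⟨(ψ lam).y, by ring⟩
    have hgT : g ∈ Subgroup.map φ (Subgroup.comap ψ (Ssub 2 1)) := by
      rw [← hks]; exact pvN_mem φ 2 1 k hkH h0 s 0
    obtain ⟨κ, hκS, hκ⟩ := Subgroup.mem_map.1 hgT
    obtain ⟨⟨A2, hA2⟩, ⟨B2, hB2⟩⟩ := Subgroup.mem_comap.1 hκS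
    have hsec := sec κ
    have hyb : φ (bK ^ (ψ κ).y) = ((φ bK) ^ 2) ^ B2 := by
      rw [map_zpow, hB2, show (2*1*B2 : ℤ) = 2 * B2 by ring, zpow_mul, zpow_two, ← pow_two]
    -- Stage 2: the `a`-part of `g` is trivial
    have heq : g = φ (aK ^ (ψ κ).x) * ((φ bK) ^ 2) ^ B2 := by
      rw [← hκ]
      conv_lhs => rw [hsec]
      rw [map_mul, hyb]
    have hcN : φ (aK ^ (ψ κ).x) ∈ Subgroup.normalClosure {φ bK ^ 2} := by
      have h' : φ (aK ^ (ψ κ).x) = g * (((φ bK) ^ 2) ^ B2)⁻¹ := by rw [heq]; group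
      rw [h']
      exact mul_mem hgN (inv_mem (Subgroup.zpow_mem _ (Subgroup.subset_normalClosure (Set.mem_singleton _)) B2))
    obtain ⟨L2, hL2⟩ := exists_list (φ bK) _ hcN
    have hc2R : φ (aK ^ (ψ κ).x) * (φ bK) ^ (2:ℤ) ∈ φ.range := by
      have r1 : φ (aK ^ (ψ κ).x) ∈ φ.range := ⟨_, rfl⟩
      have r2 : φ bK ∈ φ.range := ⟨bK, rfl⟩
      exact mul_mem r1 (Subgroup.zpow_mem _ r2 2)
    obtain ⟨k2, s2, hk2H, hks2⟩ := vc_step φ hvc _ 2 hc2R L2 (by rw [hL2])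
    obtain ⟨lam, hlam⟩ := hk2H 0
    set u : ℤ := (ψ (lam ^ 2)).x with hu
    set n : ℤ := (ψ lam).y with hn
    have h0' : (k2 0) ^ 2 ∈ Subgroup.map φ (Subgroup.comap ψ (Ssub u n)) := by
      refine Subgroup.mem_map.2
        ⟨lam ^ 2, Subgroup.mem_comap.2 ⟨dvd_refl u, ?_⟩, by rw [map_pow, hlam]⟩
      show (2 * n) ∣ (ψ (lam ^ 2)).y
      rw [map_pow, pow_two]
      show (2 * n) ∣ (ψ lam).y + (ψ lam).y
      exact ⟨1, by rw [hn]; ring⟩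
    have hT2 : φ (aK ^ (ψ κ).x) * (φ bK) ^ (2:ℤ) ∈
        Subgroup.map φ (Subgroup.comap ψ (Ssub u n)) := by
      rw [← hks2]
      refine mul_mem (pvN_mem φ u n k2 hk2H h0' s2 0) ?_
      rw [zpow_two, ← pow_two]
      exact h0'
    obtain ⟨μ, hμS, hμ⟩ := Subgroup.mem_map.1 hT2
    have hμeq : μ = aK ^ (ψ κ).x * bK ^ (2:ℤ) := by
      apply hinj
      rw [hμ, map_mul, map_zpow, map_zpow]
    rw [hμeq] at hμS
    have hμS' := Subgroup.mem_comap.1 hμS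
    rw [ψ_ab] at hμS'
    obtain ⟨hdx, hdy⟩ := hμS'
    have hn1 : n ∣ 1 := by
      have h2 : (2 * n : ℤ) ∣ 2 * 1 := by
        rw [mul_one]; exact hdy
      exact (mul_dvd_mul_iff_left (by norm_num : (2:ℤ) ≠ 0)).1 h2
    have hodd : ¬ Even n := by
      rcases Int.isUnit_iff.1 (isUnit_of_dvd_one hn1) with h | h <;>
        rw [h, Int.even_iff] <;> decide
    have hu0 : u = 0 := by
      rw [hu, map_pow, pow_two]
      show (ψ lam).x + ε (ψ lam).y * (ψ lam).x = 0
      rw [← hn, ε_odd hodd]; ring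
    have hx0 : (ψ κ).x = 0 := by
      rw [hu0] at hdx
      exact zero_dvd_iff.1 hdx
    have hgval : g = ((φ bK) ^ 2) ^ B2 := by
      rw [heq, hx0, zpow_zero, map_one, one_mul]
    rw [hgval]
    exact Subgroup.zpow_mem _ (Subgroup.subset_closure (Set.mem_singleton _)) B2
  · refine (Subgroup.closure_le _).2 (Set.singleton_subset_iff.2 ?_)
    exact Subgroup.mem_inf.2 ⟨Subgroup.subset_normalClosure (Set.mem_singleton _), ⟨bK ^ 2, by rw [map_pow]⟩⟩
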